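/- arXiv:2311.15442 — 3 statements merged into one kernel-verified Lean document; each statement's English description precedes it below -/
import Mathlib

section
/- For any d, t ∈ ℕ with t ≤ d, the number of lattice points x ∈ ℤ^d with Σ_{i=1}^d |x_i| ≤ t equals Σ_{l=0}^t 2^l · C(d,l) · C(t,l), where C(n,k) denotes the binomial coefficient. -/
open Finset

noncomputable section

/-- The lattice points of the closed `l¹` ball of radius `t` in `ℤ^d`,
i.e. `B_t ∩ ℤ^d` where `B_t = {x ∈ ℝ^d : Σ |x_i| ≤ t}`. -/
def latticeBall (d t : ℕ) : Finset (Fin d → ℤ) :=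
  (Finset.Icc (fun _ => -(t : ℤ)) (fun _ => (t : ℤ))).filter fun y => ∑ i, |y i| ≤ (t : ℤ)

lemma mem_latticeBall {d t : ℕ} {y : Fin d → ℤ} :
    y ∈ latticeBall d t ↔ ∑ i, |y i| ≤ (t : ℤ) := by
  constructor
  · exact fun h => (Finset.mem_filter.1 h).2
  · intro h
    have hb : ∀ i, |y i| ≤ (t : ℤ) := fun i =>
      (Finset.single_le_sum (f := fun i => |y i|) (fun i _ => abs_nonneg _)
        (Finset.mem_univ i)).trans h
    refine Finset.mem_filter.2 ⟨Finset.mem_Icc.2 ⟨fun i => ?_, fun i => ?_⟩, h⟩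
    · show -(t:ℤ) ≤ y i
      have := hb i; have := neg_abs_le (y i); linarith
    · show y i ≤ (t:ℤ)
      have := hb i; have := le_abs_self (y i); linarith

lemma latticeBall_zero (d : ℕ) : latticeBall d 0 = {0} := by
  ext y
  simp only [mem_latticeBall, Finset.mem_singleton, Nat.cast_zero]
  constructor
  · intro h
    funext i
    have hb : |y i| ≤ 0 :=
      (Finset.single_le_sum (f := fun i => |y i|) (fun i _ => abs_nonneg _)
        (Finset.mem_univ i)).trans h
    have := abs_nonneg (y i)
    have : |y i| = 0 := le_antisymm hb this
    simpa [abs_eq_zero] using this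
  · rintro rfl; simp

lemma latticeBall_dim_zero (t : ℕ) : (latticeBall 0 t).card = 1 := by
  have : latticeBall 0 t = {fun i => 0} := by
    ext y
    simp [mem_latticeBall, Subsingleton.elim y (fun _ => 0)]
  simp [this]

lemma latticeBall_slice (d t : ℕ) :
    (latticeBall (d + 1) t).card
      = ∑ k ∈ Finset.Icc (-(t : ℤ)) (t : ℤ), (latticeBall d (t - k.natAbs)).card := by
  rw [← Finset.card_sigma]
  refine Finset.card_bij' (fun y _ => ⟨y (Fin.last d), Fin.init y⟩)
    (fun p _ => Fin.snoc p.2 p.1) ?_ ?_ ?_ ?_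
  · intro y hy
    rw [mem_latticeBall] at hy
    have hsum : ∑ i, |Fin.init y i| + |y (Fin.last d)| = ∑ i, |y i| := by
      rw [Fin.sum_univ_castSucc]; rfl
    have habs : |y (Fin.last d)| ≤ (t : ℤ) := by
      have h0 : (0:ℤ) ≤ ∑ i, |Fin.init y i| :=
        Finset.sum_nonneg fun i _ => abs_nonneg _
      linarith
    refine Finset.mem_sigma.2 ⟨Finset.mem_Icc.2 ⟨?_, ?_⟩, ?_⟩
    · have := neg_abs_le (y (Fin.last d)); linarith
    · have := le_abs_self (y (Fin.last d)); linarith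
    · rw [mem_latticeBall]
      rw [Int.abs_eq_natAbs] at habs
      have : ((t - (y (Fin.last d)).natAbs : ℕ) : ℤ)
          = (t : ℤ) - ((y (Fin.last d)).natAbs : ℤ) := by omega
      rw [Int.abs_eq_natAbs] at hsum
      rw [this]; linarith
  · rintro ⟨k, z⟩ hp
    rw [Finset.mem_sigma] at hp
    obtain ⟨hk, hz⟩ := hp
    dsimp only at hk hz
    rw [Finset.mem_Icc] at hk
    rw [mem_latticeBall] at hz ⊢
    have hcast : ((t - k.natAbs : ℕ) : ℤ) = (t : ℤ) - |k| := by
      rw [Int.abs_eq_natAbs]; omega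
    rw [hcast] at hz
    rw [Fin.sum_univ_castSucc]
    simp only [Fin.snoc_last, Fin.snoc_castSucc]
    linarith
  · intro y hy; exact Fin.snoc_init_self y
  · rintro ⟨k, z⟩ hp
    simp only [Fin.snoc_last, Fin.init_snoc]

lemma latticeBall_succ_dim (d t : ℕ) :
    (latticeBall (d + 1) t).card + (latticeBall d t).card
      = 2 * ∑ j ∈ Finset.range (t + 1), (latticeBall d j).card := by
  rw [latticeBall_slice]
  have himg : Finset.Icc (-(t : ℤ)) (t : ℤ)
      = (Finset.range (2 * t + 1)).image (fun j : ℕ => (j : ℤ) - t) := by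
    ext x
    simp only [Finset.mem_Icc, Finset.mem_image, Finset.mem_range]
    constructor
    · intro h; exact ⟨(x + t).toNat, by omega, by omega⟩
    · rintro ⟨j, hj, rfl⟩; omega
  rw [himg, Finset.sum_image (by intro a _ b _ h; have h' : (a : ℤ) - t = (b : ℤ) - t := h; omega)]
  have hkey : ∀ j ∈ Finset.range (2 * t + 1),
      (latticeBall d (t - ((j : ℤ) - t).natAbs)).card
        = (latticeBall d (if j ≤ t then j else 2 * t - j)).card := by
    intro j hj
    rw [Finset.mem_range] at hj
    congr 2
    split <;> omega
  rw [Finset.sum_congr rfl hkey]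
  rw [← Finset.sum_range_add_sum_Ico _ (show t + 1 ≤ 2 * t + 1 by omega)]
  have h1 : ∑ j ∈ Finset.range (t + 1),
      (latticeBall d (if j ≤ t then j else 2 * t - j)).card
      = ∑ j ∈ Finset.range (t + 1), (latticeBall d j).card := by
    apply Finset.sum_congr rfl
    intro j hj
    rw [Finset.mem_range] at hj
    rw [if_pos (by omega)]
  have h2 : ∑ j ∈ Finset.Ico (t + 1) (2 * t + 1),
      (latticeBall d (if j ≤ t then j else 2 * t - j)).card
      = ∑ j ∈ Finset.range t, (latticeBall d j).card := by
    rw [Finset.sum_Ico_eq_sum_range]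
    have : ∀ i ∈ Finset.range (2 * t + 1 - (t + 1)),
        (latticeBall d (if t + 1 + i ≤ t then t + 1 + i else 2 * t - (t + 1 + i))).card
          = (latticeBall d (t - 1 - i)).card := by
      intro i hi
      rw [if_neg (by omega)]
      congr 2
      omega
    rw [Finset.sum_congr rfl this, show 2 * t + 1 - (t + 1) = t by omega,
      Finset.sum_range_reflect (fun j => (latticeBall d j).card) t]
  rw [h1, h2, Finset.sum_range_succ]
  ring

lemma choose_sum_rec (d t : ℕ) :
    ∑ l ∈ Finset.range (t + 2), 2 ^ l * (d + 1).choose l * (t + 1).choose l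
      = ∑ l ∈ Finset.range (t + 2), 2 ^ l * (d + 1).choose l * t.choose l
      + ∑ l ∈ Finset.range (t + 2), 2 ^ l * d.choose l * (t + 1).choose l
      + ∑ l ∈ Finset.range (t + 2), 2 ^ l * d.choose l * t.choose l := by
  set T : ℕ → ℕ := fun l => if l = 0 then 0 else 2 ^ l * d.choose (l - 1) * t.choose (l - 1)
    with hT
  have key : ∀ l : ℕ,
      2 ^ l * (d + 1).choose l * (t + 1).choose l + 2 * (2 ^ l * d.choose l * t.choose l)
        = (2 ^ l * (d + 1).choose l * t.choose l + 2 ^ l * d.choose l * (t + 1).choose l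
          + 2 ^ l * d.choose l * t.choose l) + T l := by
    intro l
    cases l with
    | zero => simp [hT]
    | succ l =>
      simp only [hT, if_neg (Nat.succ_ne_zero l), Nat.succ_sub_one, Nat.choose_succ_succ,
        pow_succ]
      ring
  have big := Finset.sum_congr rfl (fun l (_ : l ∈ Finset.range (t + 2)) => key l)
  simp only [Finset.sum_add_distrib, ← Finset.mul_sum] at big
  have hTsum : ∑ l ∈ Finset.range (t + 2), T l
      = 2 * ∑ l ∈ Finset.range (t + 2), 2 ^ l * d.choose l * t.choose l := by
    rw [Finset.sum_range_succ']
    simp only [hT, if_neg (Nat.succ_ne_zero _), Nat.succ_sub_one, if_pos rfl, add_zero]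
    rw [Finset.sum_range_succ (fun l => 2 ^ l * d.choose l * t.choose l) (t + 1)]
    rw [Nat.choose_succ_self t, mul_zero, add_zero, Finset.mul_sum]
    apply Finset.sum_congr rfl
    intro l _
    rw [pow_succ]
    ring
  omega

lemma card_latticeBall_general (d t : ℕ) :
    (latticeBall d t).card
      = ∑ l ∈ Finset.range (t + 1), 2 ^ l * d.choose l * t.choose l := by
  induction d generalizing t with
  | zero =>
    rw [latticeBall_dim_zero]
    rw [Finset.sum_eq_single_of_mem 0 (Finset.mem_range.2 (by omega))]
    · simp
    · intro l _ hl
      cases l with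
      | zero => exact absurd rfl hl
      | succ l => simp [Nat.choose_succ_succ]
  | succ d ihd =>
    induction t with
    | zero => rw [latticeBall_zero]; simp
    | succ t iht =>
      have A1 := latticeBall_succ_dim d (t + 1)
      have A2 := latticeBall_succ_dim d t
      rw [Finset.sum_range_succ (fun j => (latticeBall d j).card) (t + 1)] at A1
      have hrec : (latticeBall (d + 1) (t + 1)).card
          = (latticeBall (d + 1) t).card + (latticeBall d t).card
            + (latticeBall d (t + 1)).card := by omega
      rw [hrec, iht, ihd t, ihd (t + 1)]
      have e1 : ∑ l ∈ Finset.range (t + 1), 2 ^ l * (d + 1).choose l * t.choose l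
          = ∑ l ∈ Finset.range (t + 2), 2 ^ l * (d + 1).choose l * t.choose l := by
        rw [Finset.sum_range_succ (fun l => 2 ^ l * (d + 1).choose l * t.choose l) (t + 1),
          Nat.choose_succ_self t, mul_zero, add_zero]
      have e2 : ∑ l ∈ Finset.range (t + 1), 2 ^ l * d.choose l * t.choose l
          = ∑ l ∈ Finset.range (t + 2), 2 ^ l * d.choose l * t.choose l := by
        rw [Finset.sum_range_succ (fun l => 2 ^ l * d.choose l * t.choose l) (t + 1),
          Nat.choose_succ_self t, mul_zero, add_zero]
      rw [e1, e2, show t + 1 + 1 = t + 2 from rfl, choose_sum_rec d t]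
      ring

/-- `|B_t ∩ ℤ^d| = Σ_{l=0}^t 2^l · C(d,l) · C(t,l)` for `t ≤ d`. -/
theorem card_latticeBall (d t : ℕ) (ht0 : 1 ≤ t) (ht : t ≤ d) :
    (latticeBall d t).card = ∑ l ∈ Finset.range (t + 1), 2 ^ l * d.choose l * t.choose l :=
  card_latticeBall_general d t
end
end

section
/- Let d, t ∈ ℕ with d ≥ 4 and 1 ≤ t ≤ √d. Then t²/(2d) ≤ (|B_t ∩ ℤ^d| − |S_t|)/|S_t| ≤ e · t²/d, where e is Euler's number. -/
open Finset

noncomputable section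

/-- `S_t = {x ∈ {-1,0,1}^d : Σ |x_i| = t}`. -/
def sphereS (d t : ℕ) : Finset (Fin d → ℤ) :=
  (Finset.Icc (fun _ => (-1 : ℤ)) (fun _ => (1 : ℤ))).filter fun y => ∑ i, |y i| = (t : ℤ)

namespace LatticeAux

def supp {d : ℕ} (x : Fin d → ℤ) : Finset (Fin d) := univ.filter (x · ≠ 0)

lemma mem_supp {d : ℕ} {x : Fin d → ℤ} {i : Fin d} : i ∈ supp x ↔ x i ≠ 0 := by
  simp [supp]

lemma mem_latticeBall {d t : ℕ} {x : Fin d → ℤ} :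
    x ∈ latticeBall d t ↔ ∑ i, |x i| ≤ (t : ℤ) := by
  constructor
  · exact fun h => (mem_filter.mp h).2
  · intro h
    refine mem_filter.mpr ⟨?_, h⟩
    rw [Finset.mem_Icc]
    have habs : ∀ i, |x i| ≤ (t : ℤ) := fun i =>
      le_trans (Finset.single_le_sum (fun j _ => abs_nonneg (x j)) (mem_univ i)) h
    constructor <;> intro i <;> have := abs_le.mp (habs i)
    · exact this.1
    · exact this.2

def natBall (k N : ℕ) : Finset (Fin k → ℕ) :=
  (Finset.Icc 0 (fun _ => N)).filter fun g => ∑ j, g j ≤ N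

lemma mem_natBall {k N : ℕ} {g : Fin k → ℕ} : g ∈ natBall k N ↔ ∑ j, g j ≤ N := by
  constructor
  · exact fun h => (mem_filter.mp h).2
  · intro h
    refine mem_filter.mpr ⟨?_, h⟩
    rw [Finset.mem_Icc]
    refine ⟨fun i => Nat.zero_le _, fun i => ?_⟩
    exact le_trans (Finset.single_le_sum (fun j _ => Nat.zero_le _) (mem_univ i)) h

lemma card_piAntidiag_univ (m N : ℕ) :
    ((Finset.univ : Finset (Fin m)).piAntidiag N).card = (m + N - 1).choose N := by
  rw [← Finset.map_sym_eq_piAntidiag, card_map, sym_univ, card_univ,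
    Sym.card_sym_eq_choose, Fintype.card_fin]

lemma card_natBall (k N : ℕ) : (natBall k N).card = (N + k).choose k := by
  have h := Finset.card_bij'
    (s := natBall k N) (t := (Finset.univ : Finset (Fin (k+1))).piAntidiag N)
    (fun g _ => Fin.cons (N - ∑ j, g j) g)
    (fun h _ => Fin.tail h)
    (fun g hg => by
      rw [Finset.mem_piAntidiag]
      refine ⟨?_, fun i _ => mem_univ i⟩
      rw [Fin.sum_univ_succ]
      simp only [Fin.cons_zero, Fin.cons_succ]
      have := mem_natBall.mp hg
      omega)
    (fun h hh => by
      rw [mem_natBall]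
      rw [Finset.mem_piAntidiag] at hh
      have h1 : ∑ i, h i = N := hh.1
      rw [Fin.sum_univ_succ] at h1
      have h2 : ∑ j : Fin k, Fin.tail h j = ∑ i : Fin k, h i.succ := by
        simp [Fin.tail]
      simp only [h2]
      omega)
    (fun g hg => by simp)
    (fun h hh => by
      rw [Finset.mem_piAntidiag] at hh
      have h1 : ∑ i, h i = N := hh.1
      rw [Fin.sum_univ_succ] at h1
      have h2 : ∑ j : Fin k, Fin.tail h j = ∑ i : Fin k, h i.succ := by
        simp [Fin.tail]
      simp only [h2]
      have h3 : N - ∑ i : Fin k, h i.succ = h 0 := by omega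
      rw [h3, Fin.cons_self_tail])
  rw [h, card_piAntidiag_univ]
  have : k + 1 + N - 1 = k + N := by omega
  rw [this]
  rw [show (N + k) = (k + N) by omega, ← Nat.choose_symm (Nat.le_add_right k N)]
  congr 1
  omega


lemma sum_orderIso {d : ℕ} {M : Type*} [AddCommMonoid M] (s : Finset (Fin d)) (F : Fin d → M) :
    ∑ i ∈ s, F i = ∑ j : Fin s.card, F ((s.orderIsoOfFin rfl j : Fin d)) := by
  rw [← Finset.sum_coe_sort s]
  exact Fintype.sum_equiv (s.orderIsoOfFin rfl).toEquiv _ _ (fun j => rfl) |>.symm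

lemma sign_cases (a : ℤ) (ha : a ≠ 0) : Int.sign a = -1 ∨ Int.sign a = 1 := by
  match a with
  | Int.ofNat (n+1) => right; rfl
  | Int.ofNat 0 => exact absurd rfl ha
  | Int.negSucc n => left; rfl

/-- the magnitude fiber: nat vectors with support exactly `s` and sum at most `t`. -/
def magFiber {d : ℕ} (s : Finset (Fin d)) (t : ℕ) : Finset (Fin d → ℕ) :=
  (Finset.Icc 0 (fun _ => t)).filter fun m => (∀ i, m i ≠ 0 ↔ i ∈ s) ∧ ∑ i, m i ≤ t

lemma mem_magFiber {d : ℕ} {s : Finset (Fin d)} {t : ℕ} {m : Fin d → ℕ} :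
    m ∈ magFiber s t ↔ (∀ i, m i ≠ 0 ↔ i ∈ s) ∧ ∑ i, m i ≤ t := by
  constructor
  · exact fun h => (mem_filter.mp h).2
  · intro h
    refine mem_filter.mpr ⟨?_, h⟩
    rw [Finset.mem_Icc]
    refine ⟨fun i => Nat.zero_le _, fun i => ?_⟩
    exact le_trans (Finset.single_le_sum (fun j _ => Nat.zero_le _) (mem_univ i)) h.2

lemma card_magFiber {d : ℕ} (s : Finset (Fin d)) (t : ℕ) (hst : s.card ≤ t) :
    (magFiber s t).card = t.choose s.card := by
  classical
  have key : (magFiber s t).card = (natBall s.card (t - s.card)).card := by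
    refine Finset.card_bij'
      (fun m _ => fun j => m (s.orderIsoOfFin rfl j : Fin d) - 1)
      (fun g _ => fun i => if h : i ∈ s then g ((s.orderIsoOfFin rfl).symm ⟨i, h⟩) + 1 else 0)
      ?_ ?_ ?_ ?_
    · intro m hm
      obtain ⟨hsupp, hsum⟩ := mem_magFiber.mp hm
      rw [mem_natBall]
      beta_reduce
      have hone : ∀ j : Fin s.card, 1 ≤ m (s.orderIsoOfFin rfl j : Fin d) := by
        intro j
        have := (hsupp _).mpr (s.orderIsoOfFin rfl j).2
        omega
      have h1 : ∑ j : Fin s.card, (m (s.orderIsoOfFin rfl j : Fin d) - 1) + s.card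
          = ∑ j : Fin s.card, m (s.orderIsoOfFin rfl j : Fin d) := by
        calc ∑ j : Fin s.card, (m (s.orderIsoOfFin rfl j : Fin d) - 1) + s.card
            = ∑ j : Fin s.card, ((m (s.orderIsoOfFin rfl j : Fin d) - 1) + 1) := by
              rw [Finset.sum_add_distrib]; simp
          _ = _ := Finset.sum_congr rfl fun j _ => by have := hone j; omega
      have h2 : ∑ j : Fin s.card, m (s.orderIsoOfFin rfl j : Fin d) ≤ t := by
        rw [← sum_orderIso s m]
        calc ∑ i ∈ s, m i ≤ ∑ i, m i := Finset.sum_le_sum_of_subset (subset_univ s)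
          _ ≤ t := hsum
      omega
    · intro g hg
      rw [mem_natBall] at hg
      rw [mem_magFiber]
      beta_reduce
      constructor
      · intro i
        by_cases h : i ∈ s <;> simp [h]
      · have : ∑ i, (if h : i ∈ s then g ((s.orderIsoOfFin rfl).symm ⟨i, h⟩) + 1 else 0)
            = ∑ i ∈ s, (fun i => if h : i ∈ s then g ((s.orderIsoOfFin rfl).symm ⟨i, h⟩) + 1 else 0) i := by
          refine (Finset.sum_subset (subset_univ s) ?_).symm
          intro i _ hi; simp [dif_neg hi]
        rw [this, sum_orderIso s]
        have : ∀ j : Fin s.card,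
            (fun i => if h : i ∈ s then g ((s.orderIsoOfFin rfl).symm ⟨i, h⟩) + 1 else 0)
              ((s.orderIsoOfFin rfl j : Fin d)) = g j + 1 := by
          intro j
          beta_reduce
          rw [dif_pos (s.orderIsoOfFin rfl j).2]
          congr 1
          rw [show (⟨(s.orderIsoOfFin rfl j : Fin d), (s.orderIsoOfFin rfl j).2⟩ : {x // x ∈ s})
              = s.orderIsoOfFin rfl j from rfl,
            OrderIso.symm_apply_apply]
        rw [Finset.sum_congr rfl fun j _ => this j, Finset.sum_add_distrib]
        simp only [Finset.sum_const, card_univ, Fintype.card_fin, smul_eq_mul, mul_one]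
        omega
    · intro m hm
      obtain ⟨hsupp, _⟩ := mem_magFiber.mp hm
      funext i
      beta_reduce
      by_cases h : i ∈ s
      · rw [dif_pos h]
        have := (hsupp i).mpr h
        rw [show ((s.orderIsoOfFin rfl) ((s.orderIsoOfFin rfl).symm ⟨i, h⟩) : Fin d) = i by
          rw [OrderIso.apply_symm_apply]]
        omega
      · rw [dif_neg h]
        have h0 : m i = 0 := by by_contra hc; exact h ((hsupp i).mp hc)
        omega
    · intro g hg
      funext j
      beta_reduce
      rw [dif_pos (s.orderIsoOfFin rfl j).2]
      rw [show (⟨(s.orderIsoOfFin rfl j : Fin d), (s.orderIsoOfFin rfl j).2⟩ : {x // x ∈ s})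
          = s.orderIsoOfFin rfl j from rfl, OrderIso.symm_apply_apply]
      omega
  rw [key, card_natBall, Nat.sub_add_cancel hst]


lemma card_fiber (d t : ℕ) (s : Finset (Fin d)) (hst : s.card ≤ t) :
    ((latticeBall d t).filter fun x => supp x = s).card
      = 2 ^ s.card * t.choose s.card := by
  classical
  have key : ((latticeBall d t).filter fun x => supp x = s).card
      = ((s.pi fun _ => ({-1, 1} : Finset ℤ)) ×ˢ magFiber s t).card := by
    refine Finset.card_bij'
      (fun x _ => ((fun i _ => Int.sign (x i)), fun i => (x i).natAbs))
      (fun p _ => fun i => if h : i ∈ s then p.1 i h * ((p.2 i : ℕ) : ℤ) else 0)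
      ?_ ?_ ?_ ?_
    · intro x hx
      obtain ⟨hxball, hxsupp⟩ := mem_filter.mp hx
      have hne : ∀ i, x i ≠ 0 ↔ i ∈ s := fun i => by rw [← hxsupp, mem_supp]
      rw [Finset.mem_product]
      constructor
      · rw [Finset.mem_pi]
        intro i hi
        show Int.sign (x i) ∈ ({-1, 1} : Finset ℤ)
        rcases sign_cases (x i) ((hne i).mpr hi) with h | h <;> rw [h] <;> simp
      · rw [mem_magFiber]
        refine ⟨fun i => by simpa [Int.natAbs_eq_zero] using (hne i), ?_⟩
        have h1 : ((∑ i, (x i).natAbs : ℕ) : ℤ) ≤ t := by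
          push_cast
          exact mem_latticeBall.mp hxball
        exact_mod_cast h1
    · intro p hp
      rw [Finset.mem_product] at hp
      obtain ⟨hσ, hm⟩ := hp
      obtain ⟨hsupp, hsum⟩ := mem_magFiber.mp hm
      have hσval : ∀ i (hi : i ∈ s), p.1 i hi = -1 ∨ p.1 i hi = 1 := by
        intro i hi
        have := Finset.mem_pi.mp hσ i hi
        simpa using this
      have habs : ∀ i, |if h : i ∈ s then p.1 i h * ((p.2 i : ℕ) : ℤ) else 0|
          = ((p.2 i : ℕ) : ℤ) := by
        intro i
        by_cases h : i ∈ s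
        · rw [dif_pos h, abs_mul]
          rcases hσval i h with hv | hv <;> rw [hv] <;>
            simp [abs_of_nonneg (Int.natCast_nonneg _)]
        · rw [dif_neg h]
          have h0 : p.2 i = 0 := by by_contra hc; exact h ((hsupp i).mp hc)
          simp [h0]
      rw [mem_filter]
      constructor
      · rw [mem_latticeBall]
        beta_reduce
        calc ∑ i, |if h : i ∈ s then p.1 i h * ((p.2 i : ℕ) : ℤ) else 0|
            = ∑ i, ((p.2 i : ℕ) : ℤ) := Finset.sum_congr rfl fun i _ => habs i
          _ = ((∑ i, (p.2 i) : ℕ) : ℤ) := by push_cast; ring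
          _ ≤ t := by exact_mod_cast hsum
      · ext i
        rw [mem_supp]
        beta_reduce
        constructor
        · intro hne
          by_contra h
          rw [dif_neg h] at hne
          exact hne rfl
        · intro hi
          rw [dif_pos hi]
          have h1 : p.2 i ≠ 0 := (hsupp i).mpr hi
          rcases hσval i hi with hv | hv <;> rw [hv] <;> simp [h1]
    · intro x hx
      obtain ⟨hxball, hxsupp⟩ := mem_filter.mp hx
      have hne : ∀ i, x i ≠ 0 ↔ i ∈ s := fun i => by rw [← hxsupp, mem_supp]
      funext i
      beta_reduce
      by_cases h : i ∈ s
      · rw [dif_pos h]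
        rw [Int.natCast_natAbs]
        exact Int.sign_mul_abs (x i)
      · rw [dif_neg h]
        have h0 : x i = 0 := by by_contra hc; exact h ((hne i).mp hc)
        exact h0.symm
    · intro p hp
      rw [Finset.mem_product] at hp
      obtain ⟨hσ, hm⟩ := hp
      obtain ⟨hsupp, hsum⟩ := mem_magFiber.mp hm
      have hσval : ∀ i (hi : i ∈ s), p.1 i hi = -1 ∨ p.1 i hi = 1 := by
        intro i hi
        have := Finset.mem_pi.mp hσ i hi
        simpa using this
      ext : 1
      · funext i hi
        show (if h : i ∈ s then p.1 i h * ((p.2 i : ℕ) : ℤ) else 0).sign = p.1 i hi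
        rw [dif_pos hi]
        have h1 : p.2 i ≠ 0 := (hsupp i).mpr hi
        rcases hσval i hi with hv | hv <;> rw [hv]
        · rw [neg_one_mul, Int.sign_neg, Int.sign_natCast_of_ne_zero h1]
        · rw [one_mul, Int.sign_natCast_of_ne_zero h1]
      · funext i
        show (if h : i ∈ s then p.1 i h * ((p.2 i : ℕ) : ℤ) else 0).natAbs = p.2 i
        by_cases h : i ∈ s
        · rw [dif_pos h]
          rcases hσval i h with hv | hv <;> rw [hv] <;> simp
        · rw [dif_neg h]
          have h0 : p.2 i = 0 := by by_contra hc; exact h ((hsupp i).mp hc)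
          simp [h0]
  rw [key, Finset.card_product, Finset.card_pi, card_magFiber s t hst]
  simp [Finset.prod_const]


lemma mem_sphereS {d t : ℕ} {x : Fin d → ℤ} :
    x ∈ sphereS d t ↔ (∀ i, |x i| ≤ 1) ∧ ∑ i, |x i| = (t : ℤ) := by
  rw [sphereS, mem_filter, Finset.mem_Icc]
  constructor
  · rintro ⟨⟨h1, h2⟩, h3⟩
    exact ⟨fun i => abs_le.mpr ⟨h1 i, h2 i⟩, h3⟩
  · rintro ⟨h1, h2⟩
    exact ⟨⟨fun i => (abs_le.mp (h1 i)).1, fun i => (abs_le.mp (h1 i)).2⟩, h2⟩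

lemma sum_abs_eq_sum_supp {d : ℕ} (x : Fin d → ℤ) :
    ∑ i, |x i| = ∑ i ∈ supp x, |x i| := by
  refine (Finset.sum_subset (subset_univ _) ?_).symm
  intro i _ hi
  have : x i = 0 := by by_contra hc; exact hi (mem_supp.mpr hc)
  simp [this]

lemma suppcard_le {d t : ℕ} {x : Fin d → ℤ} (hx : x ∈ latticeBall d t) :
    (supp x).card ≤ t := by
  have h1 : ((supp x).card : ℤ) ≤ ∑ i ∈ supp x, |x i| := by
    calc ((supp x).card : ℤ) = ∑ _i ∈ supp x, (1 : ℤ) := by simp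
      _ ≤ ∑ i ∈ supp x, |x i| :=
        Finset.sum_le_sum fun i hi => Int.one_le_abs (mem_supp.mp hi)
  rw [← sum_abs_eq_sum_supp] at h1
  have := le_trans h1 (mem_latticeBall.mp hx)
  exact_mod_cast this

lemma sphereS_eq_filter (d t : ℕ) :
    sphereS d t = (latticeBall d t).filter fun x => (supp x).card = t := by
  ext x
  rw [mem_filter, mem_sphereS, mem_latticeBall]
  constructor
  · rintro ⟨h1, h2⟩
    refine ⟨le_of_eq h2, ?_⟩
    have hone : ∀ i ∈ supp x, |x i| = 1 := by
      intro i hi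
      have h2 : 1 ≤ |x i| := Int.one_le_abs (mem_supp.mp hi)
      have := h1 i
      omega
    have : ∑ i ∈ supp x, |x i| = ((supp x).card : ℤ) := by
      rw [Finset.sum_congr rfl hone]
      simp
    rw [sum_abs_eq_sum_supp, this] at h2
    exact_mod_cast h2
  · rintro ⟨h1, h2⟩
    rw [sum_abs_eq_sum_supp] at h1
    have hle : ∀ i ∈ supp x, (1 : ℤ) ≤ |x i| := by
      intro i hi
      exact Int.one_le_abs (mem_supp.mp hi)
    have hcard : (∑ _i ∈ supp x, (1 : ℤ)) = t := by
      rw [Finset.sum_const]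
      rw [h2]; simp
    have heq : ∑ i ∈ supp x, (1 : ℤ) = ∑ i ∈ supp x, |x i| := by
      have h3 : ∑ i ∈ supp x, (1 : ℤ) ≤ ∑ i ∈ supp x, |x i| := Finset.sum_le_sum hle
      omega
    have hone : ∀ i ∈ supp x, (1 : ℤ) = |x i| :=
      (sum_eq_sum_iff_of_le hle).mp heq
    constructor
    · intro i
      by_cases h : i ∈ supp x
      · exact le_of_eq (hone i h).symm
      · have : x i = 0 := by by_contra hc; exact h (mem_supp.mpr hc)
        simp [this]
    · rw [sum_abs_eq_sum_supp, ← heq, hcard]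

lemma card_suppcard_fiber (d t k : ℕ) (hk : k ≤ t) :
    ((latticeBall d t).filter fun x => (supp x).card = k).card
      = d.choose k * (2 ^ k * t.choose k) := by
  classical
  rw [Finset.card_eq_sum_card_fiberwise
    (f := fun x => supp x) (t := Finset.powersetCard k univ)
    (fun x hx => by
      rw [Finset.mem_coe, Finset.mem_powersetCard]
      exact ⟨subset_univ _, (mem_filter.mp hx).2⟩)]
  have hcongr : ∀ s ∈ Finset.powersetCard k univ,
      (((latticeBall d t).filter fun x => (supp x).card = k).filter fun x => supp x = s).card
        = 2 ^ k * t.choose k := by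
    intro s hs
    have hcard : s.card = k := (Finset.mem_powersetCard.mp hs).2
    rw [Finset.filter_filter]
    have heq : ((latticeBall d t).filter fun x => (supp x).card = k ∧ supp x = s)
        = (latticeBall d t).filter fun x => supp x = s := by
      apply Finset.filter_congr
      intro x _
      constructor
      · exact fun h => h.2
      · exact fun h => ⟨h ▸ hcard, h⟩
    rw [heq, card_fiber d t s (hcard ▸ hk), hcard]
  rw [Finset.sum_congr rfl hcongr, Finset.sum_const, Finset.card_powersetCard,
    card_univ, Fintype.card_fin, smul_eq_mul]

lemma card_latticeBall (d t : ℕ) :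
    (latticeBall d t).card = ∑ k ∈ range (t + 1), d.choose k * (2 ^ k * t.choose k) := by
  classical
  rw [Finset.card_eq_sum_card_fiberwise
    (f := fun x => (supp x).card) (t := range (t + 1))
    (fun x hx => Finset.mem_range.mpr (Nat.lt_succ_of_le (suppcard_le hx)))]
  exact Finset.sum_congr rfl fun k hk =>
    card_suppcard_fiber d t k (Nat.lt_succ_iff.mp (Finset.mem_range.mp hk))

lemma card_sphereS (d t : ℕ) : (sphereS d t).card = d.choose t * 2 ^ t := by
  rw [sphereS_eq_filter, card_suppcard_fiber d t t le_rfl, Nat.choose_self, mul_one]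


/-- the summand -/
def f (d t k : ℕ) : ℕ := d.choose k * (2 ^ k * t.choose k)

lemma key_quad {d t k : ℕ} (hk : k + 2 ≤ t) (ht2 : t ^ 2 ≤ d) :
    (k + 1) ^ 2 ≤ (d - k) * (t - k) := by
  have htd : t ≤ d := le_trans (by nlinarith) ht2
  zify [show k ≤ d by omega, show k ≤ t by omega]
  have h1 : ((t : ℤ)) ^ 2 ≤ d := by exact_mod_cast ht2
  have h2 : (k : ℤ) + 2 ≤ t := by exact_mod_cast hk
  nlinarith [sq_nonneg ((t : ℤ) - k - 2), sq_nonneg ((t : ℤ) + k), sq_nonneg ((k : ℤ) + 1)]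

lemma step (d t k : ℕ) (hk : k + 2 ≤ t) (ht2 : t ^ 2 ≤ d) :
    2 * f d t k ≤ f d t (k + 1) := by
  have c1 : d.choose (k + 1) * (k + 1) = d.choose k * (d - k) := Nat.choose_succ_right_eq d k
  have c2 : t.choose (k + 1) * (k + 1) = t.choose k * (t - k) := Nat.choose_succ_right_eq t k
  have key := key_quad hk ht2
  have hmain : 2 * f d t k * (k + 1) ^ 2 ≤ f d t (k + 1) * (k + 1) ^ 2 := by
    have expand : f d t (k + 1) * (k + 1) ^ 2
        = (2 ^ (k + 1) * (d.choose k * t.choose k)) * ((d - k) * (t - k)) := by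
      calc f d t (k + 1) * (k + 1) ^ 2
          = (d.choose (k + 1) * (k + 1)) * (t.choose (k + 1) * (k + 1)) * 2 ^ (k + 1) := by
            unfold f; ring
        _ = _ := by rw [c1, c2]; ring
    calc 2 * f d t k * (k + 1) ^ 2
        = (2 ^ (k + 1) * (d.choose k * t.choose k)) * (k + 1) ^ 2 := by unfold f; ring
      _ ≤ (2 ^ (k + 1) * (d.choose k * t.choose k)) * ((d - k) * (t - k)) :=
          Nat.mul_le_mul_left _ key
      _ = f d t (k + 1) * (k + 1) ^ 2 := expand.symm
  exact Nat.le_of_mul_le_mul_right hmain (by positivity)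

lemma chain (d t : ℕ) (ht2 : t ^ 2 ≤ d) :
    ∀ j k, k + j + 1 = t → f d t k * 2 ^ j ≤ f d t (t - 1) := by
  intro j
  induction j with
  | zero =>
    intro k hk
    have : k = t - 1 := by omega
    simp [this]
  | succ j ih =>
    intro k hk
    have h1 : f d t k * 2 ^ (j + 1) = (2 * f d t k) * 2 ^ j := by ring
    rw [h1]
    calc (2 * f d t k) * 2 ^ j ≤ f d t (k + 1) * 2 ^ j :=
          Nat.mul_le_mul_right _ (step d t k (by omega) ht2)
      _ ≤ f d t (t - 1) := ih (k + 1) (by omega)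

lemma hgeom : ∀ n : ℕ, ∑ k ∈ range n, 2 ^ k = 2 ^ n - 1 := by
  intro n
  induction n with
  | zero => simp
  | succ n ih =>
    rw [Finset.sum_range_succ, ih, pow_succ]
    have := Nat.one_le_two_pow (n := n)
    omega

lemma D_le (d t : ℕ) (ht : 1 ≤ t) (ht2 : t ^ 2 ≤ d) :
    ∑ k ∈ range t, f d t k ≤ 2 * f d t (t - 1) := by
  have h1 : (∑ k ∈ range t, f d t k) * 2 ^ (t - 1)
      ≤ f d t (t - 1) * 2 ^ t := by
    rw [Finset.sum_mul]
    calc ∑ k ∈ range t, f d t k * 2 ^ (t - 1)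
        ≤ ∑ k ∈ range t, f d t (t - 1) * 2 ^ k := by
          refine Finset.sum_le_sum fun k hk => ?_
          have hkt : k < t := Finset.mem_range.mp hk
          have hsplit : f d t k * 2 ^ (t - 1) = (f d t k * 2 ^ (t - 1 - k)) * 2 ^ k := by
            rw [mul_assoc, ← pow_add]
            congr 2
            omega
          rw [hsplit]
          exact Nat.mul_le_mul_right _ (chain d t ht2 (t - 1 - k) k (by omega))
      _ = f d t (t - 1) * ∑ k ∈ range t, 2 ^ k := by rw [Finset.mul_sum]
      _ ≤ f d t (t - 1) * 2 ^ t := by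
          rw [hgeom]
          exact Nat.mul_le_mul_left _ (Nat.sub_le _ _)
  have hp2 : (2 : ℕ) ^ t = 2 * 2 ^ (t - 1) := by
    conv_lhs => rw [show t = (t - 1) + 1 by omega]
    rw [pow_succ]; ring
  have h2 : f d t (t - 1) * 2 ^ t = (2 * f d t (t - 1)) * 2 ^ (t - 1) := by
    rw [hp2]; ring
  rw [h2] at h1
  exact Nat.le_of_mul_le_mul_right h1 (by positivity)


end LatticeAux

open LatticeAux in
/-- Lemma 2.4: for `d ≥ 4` and `1 ≤ t ≤ √d`,
`t²/(2d) ≤ (|B_t ∩ ℤ^d| - |S_t|)/|S_t| ≤ e · t²/d`. -/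
theorem latticeBall_sphereS_ratio (d t : ℕ) (hd : 4 ≤ d) (ht : 1 ≤ t)
    (htd : (t : ℝ) ≤ Real.sqrt d) :
    (t : ℝ) ^ 2 / (2 * d) ≤
        (((latticeBall d t).card : ℝ) - (sphereS d t).card) / (sphereS d t).card ∧
      (((latticeBall d t).card : ℝ) - (sphereS d t).card) / (sphereS d t).card ≤
        Real.exp 1 * (t : ℝ) ^ 2 / d := by
  have ht2 : t ^ 2 ≤ d := by
    have h0 : ((t : ℝ)) ^ 2 ≤ (Real.sqrt d) ^ 2 := by
      have := Real.sqrt_nonneg (d : ℝ)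
      nlinarith
    rw [Real.sq_sqrt (by positivity)] at h0
    exact_mod_cast h0
  have htled : t ≤ d := le_trans (by nlinarith) ht2
  have ht2t : 2 * t ≤ d + 1 := by nlinarith
  -- cardinalities
  set S := (sphereS d t).card with hS
  set N := (latticeBall d t).card with hN
  have hSval : S = f d t t := by
    rw [hS, card_sphereS, f, Nat.choose_self, mul_one]
  have hNval : N = ∑ k ∈ range (t + 1), f d t k := card_latticeBall d t
  have hSpos : 0 < S := by
    rw [hSval, f, Nat.choose_self, mul_one]
    exact Nat.mul_pos (Nat.choose_pos htled) (by positivity)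
  have hSleN : S ≤ N := by
    rw [hSval, hNval]
    exact Finset.single_le_sum (f := fun k => f d t k) (fun k _ => Nat.zero_le _)
      (Finset.mem_range.mpr (Nat.lt_succ_self t))
  have hDval : N - S = ∑ k ∈ range t, f d t k := by
    rw [hNval, Finset.sum_range_succ, hSval]
    omega
  -- choose identities
  have hcd : d.choose t * t = d.choose (t - 1) * (d - (t - 1)) := by
    have := Nat.choose_succ_right_eq d (t - 1)
    rwa [show t - 1 + 1 = t by omega] at this
  have htc : t.choose (t - 1) = t := by
    rw [← Nat.choose_symm (Nat.sub_le t 1), Nat.sub_sub_self ht, Nat.choose_one_right]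
  have hfval : f d t (t - 1) = d.choose (t - 1) * (2 ^ (t - 1) * t) := by
    rw [f, htc]
  have hp2 : (2 : ℕ) ^ t = 2 * 2 ^ (t - 1) := by
    conv_lhs => rw [show t = (t - 1) + 1 by omega]
    rw [pow_succ]; ring
  -- lower bound, nat version
  have L1 : t ^ 2 * S ≤ 2 * d * (N - S) := by
    have hfD : f d t (t - 1) ≤ N - S := by
      rw [hDval]
      exact Finset.single_le_sum (f := fun k => f d t k) (fun k _ => Nat.zero_le _)
        (Finset.mem_range.mpr (by omega))
    have L2 : t ^ 2 * S ≤ 2 * d * f d t (t - 1) := by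
      rw [hSval, hfval, f, Nat.choose_self, mul_one]
      calc t ^ 2 * (d.choose t * 2 ^ t) = (d.choose t * t) * (t * 2 ^ t) := by ring
        _ = (d.choose (t - 1) * (d - (t - 1))) * (t * 2 ^ t) := by rw [hcd]
        _ ≤ (d.choose (t - 1) * d) * (t * 2 ^ t) :=
            Nat.mul_le_mul_right _ (Nat.mul_le_mul_left _ (Nat.sub_le _ _))
        _ = 2 * d * (d.choose (t - 1) * (2 ^ (t - 1) * t)) := by rw [hp2]; ring
    exact le_trans L2 (Nat.mul_le_mul_left _ hfD)
  -- upper bound, nat version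
  have U1 : d * (N - S) ≤ 2 * t ^ 2 * S := by
    have hD2 : N - S ≤ 2 * f d t (t - 1) := by rw [hDval]; exact D_le d t ht ht2
    have U2 : d * (2 * f d t (t - 1)) ≤ 2 * t ^ 2 * S := by
      rw [hSval, hfval, f, Nat.choose_self, mul_one]
      have hdd : d ≤ 2 * (d - (t - 1)) := by omega
      calc d * (2 * (d.choose (t - 1) * (2 ^ (t - 1) * t)))
          = d * (d.choose (t - 1) * (t * 2 ^ t)) := by rw [hp2]; ring
        _ ≤ (2 * (d - (t - 1))) * (d.choose (t - 1) * (t * 2 ^ t)) :=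
            Nat.mul_le_mul_right _ hdd
        _ = 2 * (d.choose (t - 1) * (d - (t - 1))) * (t * 2 ^ t) := by ring
        _ = 2 * (d.choose t * t) * (t * 2 ^ t) := by rw [hcd]
        _ = 2 * t ^ 2 * (d.choose t * 2 ^ t) := by ring
    calc d * (N - S) ≤ d * (2 * f d t (t - 1)) := Nat.mul_le_mul_left _ hD2
      _ ≤ _ := U2
  -- pass to the reals
  have hSR : (0 : ℝ) < (S : ℝ) := by exact_mod_cast hSpos
  have hdR : (0 : ℝ) < (d : ℝ) := by positivity
  have hsub : ((N : ℝ)) - (S : ℝ) = ((N - S : ℕ) : ℝ) := by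
    rw [Nat.cast_sub hSleN]
  rw [hsub]
  constructor
  · rw [div_le_div_iff₀ (by positivity) hSR]
    have : ((t ^ 2 * S : ℕ) : ℝ) ≤ ((2 * d * (N - S) : ℕ) : ℝ) := by exact_mod_cast L1
    push_cast at this ⊢
    nlinarith
  · rw [div_le_div_iff₀ hSR hdR]
    have h1 : ((d * (N - S) : ℕ) : ℝ) ≤ ((2 * t ^ 2 * S : ℕ) : ℝ) := by exact_mod_cast U1
    have h2e : (2 : ℝ) ≤ Real.exp 1 := by
      have := Real.add_one_le_exp (1 : ℝ)
      linarith
    push_cast at h1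
    have hts : (0 : ℝ) ≤ (t : ℝ) ^ 2 * (S : ℝ) := by positivity
    nlinarith
end
end

section
/- Let d, t ∈ ℕ with d ≥ 4 and 1 ≤ t ≤ √d. Then for every ξ ∈ 𝕋^d one has |m_t(ξ) − s_t(ξ)| ≤ 2e · t²/d, where e is Euler's number. -/
open Finset

noncomputable section

/-- `m_t(ξ) = |B_t ∩ ℤ^d|⁻¹ Σ_{x ∈ B_t ∩ ℤ^d} e(x·ξ)`, where `e(y) = e^{2πiy}`. -/
def mMul (d t : ℕ) (ξ : Fin d → ℝ) : ℂ :=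
  ((latticeBall d t).card : ℂ)⁻¹ *
    ∑ x ∈ latticeBall d t, Complex.exp (2 * (Real.pi : ℂ) * Complex.I * ∑ k, (x k : ℂ) * (ξ k : ℂ))

/-- `s_t(ξ) = |S_t|⁻¹ Σ_{x ∈ S_t} e(x·ξ)`, where `e(y) = e^{2πiy}`. -/
def sMul (d t : ℕ) (ξ : Fin d → ℝ) : ℂ :=
  ((sphereS d t).card : ℂ)⁻¹ *
    ∑ x ∈ sphereS d t, Complex.exp (2 * (Real.pi : ℂ) * Complex.I * ∑ k, (x k : ℂ) * (ξ k : ℂ))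


namespace Cor25

variable {d t : ℕ}

def supp {d : ℕ} (x : Fin d → ℤ) : Finset (Fin d) := univ.filter fun i => x i ≠ 0

lemma mem_supp {x : Fin d → ℤ} {i : Fin d} : i ∈ supp x ↔ x i ≠ 0 := by simp [supp]

lemma image_orderEmbOfFin (s : Finset (Fin d)) :
    image (s.orderEmbOfFin rfl) univ = s := by
  ext a
  simp only [mem_image, mem_univ, true_and]
  constructor
  · rintro ⟨l, rfl⟩; exact s.orderEmbOfFin_mem rfl l
  · intro ha
    have : a ∈ Set.range (s.orderEmbOfFin rfl) := by
      rw [Finset.range_orderEmbOfFin]; exact ha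
    obtain ⟨l, hl⟩ := this
    exact ⟨l, hl⟩

def sig {d : ℕ} (s : Finset (Fin d)) (x : Fin d → ℤ) (k : Fin s.card) : ℕ :=
  ∑ l ∈ Finset.Iic k, (x (s.orderEmbOfFin rfl l)).natAbs

def pssOf {d : ℕ} (s : Finset (Fin d)) (x : Fin d → ℤ) : Finset ℕ :=
  image (fun k => sig s x k - 1) univ

lemma one_le_sig {s : Finset (Fin d)} {x : Fin d → ℤ} (hx : ∀ i ∈ s, x i ≠ 0)
    (k : Fin s.card) : 1 ≤ sig s x k := by
  have h1 : 1 ≤ (x (s.orderEmbOfFin rfl k)).natAbs :=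
    Int.natAbs_pos.mpr (hx _ (s.orderEmbOfFin_mem rfl k))
  calc 1 ≤ (x (s.orderEmbOfFin rfl k)).natAbs := h1
    _ ≤ sig s x k := Finset.single_le_sum (f := fun l => (x (s.orderEmbOfFin rfl l)).natAbs)
      (fun l _ => Nat.zero_le _) (Finset.mem_Iic.mpr le_rfl)

lemma sig_strictMono {s : Finset (Fin d)} {x : Fin d → ℤ} (hx : ∀ i ∈ s, x i ≠ 0) :
    StrictMono (sig s x) := by
  intro k k' hkk
  refine Finset.sum_lt_sum_of_subset (Finset.Iic_subset_Iic.mpr hkk.le)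
    (i := k') (Finset.mem_Iic.mpr le_rfl)
    (fun h => absurd (Finset.mem_Iic.mp h) hkk.not_ge) ?_ (fun j _ _ => Nat.zero_le _)
  exact Int.natAbs_pos.mpr (hx _ (s.orderEmbOfFin_mem rfl k'))

lemma sub_one_strictMono {s : Finset (Fin d)} {x : Fin d → ℤ} (hx : ∀ i ∈ s, x i ≠ 0) :
    StrictMono (fun k => sig s x k - 1) := by
  intro a b h
  have h2 := sig_strictMono hx h
  have h1 := one_le_sig hx a
  show sig s x a - 1 < sig s x b - 1
  omega

lemma sig_cast_le {x : Fin d → ℤ} (k : Fin (supp x).card) :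
    ((sig (supp x) x k : ℤ)) ≤ ∑ i, |x i| := by
  have h1 : ((sig (supp x) x k : ℤ)) = ∑ l ∈ Finset.Iic k, |x ((supp x).orderEmbOfFin rfl l)| := by
    rw [sig, Nat.cast_sum]
    exact Finset.sum_congr rfl fun l _ => (Int.abs_eq_natAbs _).symm
  rw [h1]
  have h2 : ∑ l ∈ Finset.Iic k, |x ((supp x).orderEmbOfFin rfl l)| ≤
      ∑ l : Fin (supp x).card, |x ((supp x).orderEmbOfFin rfl l)| :=
    Finset.sum_le_sum_of_subset_of_nonneg (Finset.subset_univ _) (fun _ _ _ => abs_nonneg _)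
  have h3 : ∑ i ∈ supp x, |x i| = ∑ l : Fin (supp x).card, |x ((supp x).orderEmbOfFin rfl l)| := by
    conv_lhs => rw [← image_orderEmbOfFin (supp x)]
    exact Finset.sum_image (fun a _ b _ h => ((supp x).orderEmbOfFin rfl).injective h)
  have h4 : ∑ i ∈ supp x, |x i| ≤ ∑ i, |x i| :=
    Finset.sum_le_sum_of_subset_of_nonneg (Finset.subset_univ _) (fun _ _ _ => abs_nonneg _)
  omega

lemma pssOf_card {s : Finset (Fin d)} {x : Fin d → ℤ} (hx : ∀ i ∈ s, x i ≠ 0) :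
    (pssOf s x).card = s.card := by
  rw [pssOf, Finset.card_image_of_injective _ (sub_one_strictMono hx).injective,
    card_univ, Fintype.card_fin]

def phi {d : ℕ} (x : Fin d → ℤ) :
    Σ s : Finset (Fin d), ((∀ i, i ∈ s → ℤ) × Finset ℕ) :=
  ⟨supp x, (fun i _ => if 0 < x i then 1 else -1, pssOf (supp x) x)⟩

lemma ball_card_le (d t : ℕ) :
    (latticeBall d t).card ≤ ∑ j ∈ range (d + 1), d.choose j * (2 ^ j * t.choose j) := by
  classical
  have hcard :
      ((univ : Finset (Fin d)).powerset.sigma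
        (fun s => (s.pi fun _ => ({-1, 1} : Finset ℤ)) ×ˢ (range t).powersetCard s.card)).card
        = ∑ j ∈ range (d + 1), d.choose j * (2 ^ j * t.choose j) := by
    rw [Finset.card_sigma]
    have h1 : ∀ s ∈ (univ : Finset (Fin d)).powerset,
        ((s.pi fun _ => ({-1, 1} : Finset ℤ)) ×ˢ (range t).powersetCard s.card).card
          = 2 ^ s.card * t.choose s.card := by
      intro s _
      rw [Finset.card_product, Finset.card_pi, Finset.card_powersetCard, Finset.card_range]
      congr 1
      rw [Finset.prod_const]
      congr 1
    rw [Finset.sum_congr rfl h1, Finset.sum_powerset_apply_card (fun m => 2 ^ m * t.choose m)]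
    simp only [card_univ, Fintype.card_fin, smul_eq_mul]
  rw [← hcard]
  apply Finset.card_le_card_of_injOn phi
  · -- maps to
    intro x hx
    have hsum : ∑ i, |x i| ≤ (t : ℤ) := (Finset.mem_filter.mp hx).2
    have hx0 : ∀ i ∈ supp x, x i ≠ 0 := fun i hi => mem_supp.mp hi
    simp only [phi]
    refine Finset.mem_sigma.mpr ⟨Finset.mem_powerset.mpr (Finset.subset_univ _), ?_⟩
    refine Finset.mem_product.mpr ⟨?_, ?_⟩
    · refine Finset.mem_pi.mpr fun i hi => ?_
      show (if 0 < x i then (1 : ℤ) else -1) ∈ ({-1, 1} : Finset ℤ)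
      split_ifs <;> simp
    · refine Finset.mem_powersetCard.mpr ⟨?_, pssOf_card hx0⟩
      intro a ha
      obtain ⟨k, -, rfl⟩ := Finset.mem_image.mp ha
      have h1 := one_le_sig hx0 k
      have h2 : sig (supp x) x k ≤ t := by
        have h3 : ((sig (supp x) x k : ℤ)) ≤ (t : ℤ) := le_trans (sig_cast_le k) hsum
        exact_mod_cast h3
      rw [Finset.mem_range]
      omega
  · -- injective
    intro x hx y hy hxy
    have hs : supp x = supp y := congrArg Sigma.fst hxy
    have hu : pssOf (supp x) x = pssOf (supp x) y := by
      have h := congrArg (fun a : (Σ s : Finset (Fin d), ((∀ i, i ∈ s → ℤ) × Finset ℕ)) =>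
        a.2.2) hxy
      simp only [phi] at h
      rw [← hs] at h
      exact h
    have hsg : ∀ i, i ∈ supp x →
        (if 0 < x i then (1 : ℤ) else -1) = (if 0 < y i then 1 else -1) := by
      intro i hi
      have h := congrArg (fun a : (Σ s : Finset (Fin d), ((∀ i, i ∈ s → ℤ) × Finset ℕ)) =>
        if h : i ∈ a.1 then a.2.1 i h else 0) hxy
      simp only [phi] at h
      have hi' : i ∈ supp y := hs ▸ hi
      change (if h : i ∈ supp x then (if 0 < x i then (1 : ℤ) else -1) else 0)
        = (if h : i ∈ supp y then (if 0 < y i then (1 : ℤ) else -1) else 0) at h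
      rw [dif_pos hi, dif_pos hi'] at h
      exact h
    have hx0 : ∀ i ∈ supp x, x i ≠ 0 := fun i hi => mem_supp.mp hi
    have hy0 : ∀ i ∈ supp x, y i ≠ 0 := fun i hi => mem_supp.mp (hs ▸ hi)
    have hcx : (pssOf (supp x) x).card = (supp x).card := pssOf_card hx0
    have hfx := Finset.orderEmbOfFin_unique hcx (f := fun k => sig (supp x) x k - 1)
      (fun k => Finset.mem_image_of_mem _ (Finset.mem_univ k)) (sub_one_strictMono hx0)
    have hfy := Finset.orderEmbOfFin_unique hcx (f := fun k => sig (supp x) y k - 1)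
      (fun k => by rw [hu]; exact Finset.mem_image_of_mem _ (Finset.mem_univ k))
      (sub_one_strictMono hy0)
    have hsig : ∀ k, sig (supp x) x k = sig (supp x) y k := by
      intro k
      have e1 := congrFun hfx k
      have e2 := congrFun hfy k
      have h1 := one_le_sig hx0 k
      have h2 := one_le_sig hy0 k
      omega
    have habs : ∀ n, ∀ k : Fin (supp x).card, (k : ℕ) < n →
        (x ((supp x).orderEmbOfFin rfl k)).natAbs
          = (y ((supp x).orderEmbOfFin rfl k)).natAbs := by
      intro n
      induction n with
      | zero => intro k hk; omega
      | succ m ih =>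
        intro k hk
        have hx' := hsig k
        rw [sig, sig, ← Finset.Iio_insert, Finset.sum_insert (by simp),
          Finset.sum_insert (by simp)] at hx'
        have hio : ∑ l ∈ Finset.Iio k, (x ((supp x).orderEmbOfFin rfl l)).natAbs
            = ∑ l ∈ Finset.Iio k, (y ((supp x).orderEmbOfFin rfl l)).natAbs := by
          refine Finset.sum_congr rfl fun l hl => ih l ?_
          have hlt : l < k := Finset.mem_Iio.mp hl
          have hlt' : (l : ℕ) < (k : ℕ) := hlt
          omega
        omega
    funext i
    by_cases hi : i ∈ supp x
    · obtain ⟨k, -, rfl⟩ := Finset.mem_image.mp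
        (show i ∈ image ((supp x).orderEmbOfFin rfl) univ by
          rw [image_orderEmbOfFin (supp x)]; exact hi)
      have h1 := habs ((supp x).card) k k.isLt
      have h2 := hsg _ hi
      have h3 := hx0 _ hi
      have h4 := hy0 _ hi
      split_ifs at h2 <;> omega
    · have h1 : x i = 0 := by by_contra h; exact hi (mem_supp.mpr h)
      have h2 : y i = 0 := by by_contra h; exact hi (hs ▸ mem_supp.mpr h)
      rw [h1, h2]


def psi {d : ℕ} (a : Σ s : Finset (Fin d), (∀ i, i ∈ s → ℤ)) : Fin d → ℤ :=
  fun i => if h : i ∈ a.1 then a.2 i h else 0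

lemma sphere_card_ge (d t : ℕ) : 2 ^ t * d.choose t ≤ (sphereS d t).card := by
  classical
  have hcard : ((powersetCard t (univ : Finset (Fin d))).sigma
      (fun s => s.pi fun _ => ({-1, 1} : Finset ℤ))).card = 2 ^ t * d.choose t := by
    rw [Finset.card_sigma]
    have h1 : ∀ s ∈ powersetCard t (univ : Finset (Fin d)),
        (s.pi fun _ => ({-1, 1} : Finset ℤ)).card = 2 ^ t := by
      intro s hs
      rw [Finset.card_pi, Finset.prod_const, (Finset.mem_powersetCard.mp hs).2]
      norm_num
    rw [Finset.sum_congr rfl h1, Finset.sum_const, Finset.card_powersetCard, card_univ,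
      Fintype.card_fin, smul_eq_mul, mul_comm]
  rw [← hcard]
  apply Finset.card_le_card_of_injOn psi
  · intro a ha
    obtain ⟨s, f⟩ := a
    obtain ⟨hs, hf⟩ := Finset.mem_sigma.mp ha
    have hst : s.card = t := (Finset.mem_powersetCard.mp hs).2
    have hmem : ∀ i (h : i ∈ s), f i h = -1 ∨ f i h = 1 := by
      intro i h
      have := Finset.mem_pi.mp hf i h
      simpa using this
    refine Finset.mem_filter.mpr ⟨?_, ?_⟩
    · refine Finset.mem_Icc.mpr ⟨?_, ?_⟩ <;> intro i <;> show _ ≤ _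
      · by_cases h : i ∈ s
        · rcases hmem i h with h' | h' <;> simp [psi, dif_pos h, h']
        · simp [psi, dif_neg h]
      · by_cases h : i ∈ s
        · rcases hmem i h with h' | h' <;> simp [psi, dif_pos h, h']
        · simp [psi, dif_neg h]
    · have h2 : ∑ i ∈ s, |psi ⟨s, f⟩ i| = ∑ i : Fin d, |psi ⟨s, f⟩ i| := by
        refine Finset.sum_subset (Finset.subset_univ s) fun i _ his => ?_
        simp [psi, dif_neg his]
      have h3 : ∑ i ∈ s, |psi ⟨s, f⟩ i| = ∑ i ∈ s, 1 := by
        refine Finset.sum_congr rfl fun i hi => ?_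
        rcases hmem i hi with h' | h' <;> simp [psi, dif_pos hi, h']
      rw [← h2, h3, Finset.sum_const, nsmul_eq_mul, mul_one, hst]
  · intro a ha b hb hab
    obtain ⟨s, f⟩ := a
    obtain ⟨s', f'⟩ := b
    obtain ⟨hs, hf⟩ := Finset.mem_sigma.mp ha
    obtain ⟨hs', hf'⟩ := Finset.mem_sigma.mp hb
    have hmem : ∀ i (h : i ∈ s), f i h = -1 ∨ f i h = 1 := by
      intro i h; have := Finset.mem_pi.mp hf i h; simpa using this
    have hmem' : ∀ i (h : i ∈ s'), f' i h = -1 ∨ f' i h = 1 := by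
      intro i h; have := Finset.mem_pi.mp hf' i h; simpa using this
    have hss : s = s' := by
      ext i
      constructor
      · intro hi
        by_contra hi'
        have := congrFun hab i
        rw [psi, psi] at this
        simp only [dif_pos hi, dif_neg hi'] at this
        rcases hmem i hi with h' | h' <;> omega
      · intro hi
        by_contra hi'
        have := congrFun hab i
        rw [psi, psi] at this
        simp only [dif_pos hi, dif_neg hi'] at this
        rcases hmem' i hi with h' | h' <;> omega
    subst hss
    have hff : f = f' := by
      funext i h
      have := congrFun hab i
      rw [psi, psi] at this
      simpa only [dif_pos h] using this
    rw [hff]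


lemma choose_mul_pow_le {d t : ℕ} (htd : t ≤ d) : ∀ i, i ≤ t →
    d.choose (t - i) * (d - t + 1) ^ i ≤ d.choose t * t ^ i := by
  intro i
  induction i with
  | zero => simp
  | succ n ih =>
    intro hn1
    have hn : n ≤ t := by omega
    set j := t - (n + 1) with hj
    have hj1 : j + 1 = t - n := by omega
    have hkey : d.choose j * (d - t + 1) ≤ d.choose (j + 1) * t := by
      have h1 := Nat.choose_succ_right_eq d j
      have h2 : d.choose j * (d - t + 1) ≤ d.choose j * (d - j) :=
        Nat.mul_le_mul_left _ (by omega)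
      have h4 : d.choose (j + 1) * (j + 1) ≤ d.choose (j + 1) * t :=
        Nat.mul_le_mul_left _ (by omega)
      omega
    calc d.choose j * (d - t + 1) ^ (n + 1)
        = (d.choose j * (d - t + 1)) * (d - t + 1) ^ n := by ring
      _ ≤ (d.choose (j + 1) * t) * (d - t + 1) ^ n := Nat.mul_le_mul_right _ hkey
      _ = t * (d.choose (t - n) * (d - t + 1) ^ n) := by rw [hj1]; ring
      _ ≤ t * (d.choose t * t ^ n) := Nat.mul_le_mul_left _ (ih hn)
      _ = d.choose t * t ^ (n + 1) := by ring

lemma term_le {d t : ℕ} (htd : t ≤ d) {i : ℕ} (hit : i ≤ t) :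
    d.choose (t - i) * (2 ^ (t - i) * t.choose (t - i)) * ((2 * (d - t + 1)) ^ i * i.factorial)
      ≤ 2 ^ t * d.choose t * (t ^ 2) ^ i := by
  have h1 : t.choose (t - i) = t.choose i := Nat.choose_symm hit
  have h2 : t.choose i * i.factorial ≤ t ^ i := by
    calc t.choose i * i.factorial = i.factorial * t.choose i := mul_comm _ _
      _ = t.descFactorial i := (Nat.descFactorial_eq_factorial_mul_choose t i).symm
      _ ≤ t ^ i := Nat.descFactorial_le_pow t i
  have h3 := choose_mul_pow_le htd i hit
  have hpow : (2 : ℕ) ^ (t - i) * 2 ^ i = 2 ^ t := by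
    rw [← pow_add]; congr 1; omega
  calc d.choose (t - i) * (2 ^ (t - i) * t.choose (t - i)) * ((2 * (d - t + 1)) ^ i * i.factorial)
      = (2 ^ (t - i) * 2 ^ i) * ((d.choose (t - i) * (d - t + 1) ^ i) * (t.choose i * i.factorial))
        := by rw [h1, mul_pow]; ring
    _ ≤ (2 ^ (t - i) * 2 ^ i) * ((d.choose t * t ^ i) * t ^ i) :=
        Nat.mul_le_mul_left _ (Nat.mul_le_mul h3 h2)
    _ = 2 ^ t * d.choose t * (t ^ 2) ^ i := by rw [hpow]; ring

lemma sum_T (d t : ℕ) (htd : t ≤ d) :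
    ∑ j ∈ range (d + 1), d.choose j * (2 ^ j * t.choose j)
      = (∑ i ∈ range t,
          d.choose (t - (i + 1)) * (2 ^ (t - (i + 1)) * t.choose (t - (i + 1))))
        + 2 ^ t * d.choose t := by
  have hsub : ∑ j ∈ range (t + 1), d.choose j * (2 ^ j * t.choose j)
      = ∑ j ∈ range (d + 1), d.choose j * (2 ^ j * t.choose j) := by
    refine Finset.sum_subset (Finset.range_subset_range.mpr (by omega)) fun j hj hj' => ?_
    have h1 : t < j := by
      rw [Finset.mem_range] at hj'; omega
    simp [Nat.choose_eq_zero_of_lt h1]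
  rw [← hsub, ← Finset.sum_range_reflect, Finset.sum_range_succ']
  simp only [Nat.add_sub_cancel, Nat.sub_zero, Nat.choose_self, mul_one]
  ring

lemma sum_inv_factorial_le (t : ℕ) :
    ∑ i ∈ range t, (1 : ℝ) / (i + 1).factorial ≤ Real.exp 1 := by
  have h := Real.sum_le_exp_of_nonneg (zero_le_one) (t + 1)
  rw [Finset.sum_range_succ'] at h
  simp only [one_pow] at h
  have h0 : ((Nat.factorial 0 : ℕ) : ℝ) = 1 := by norm_num [Nat.factorial]
  rw [h0] at h
  have he : ∀ i ∈ range t, (1 : ℝ) / (i + 1).factorial = 1 / ((i + 1).factorial : ℝ) :=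
    fun i _ => rfl
  norm_num at h ⊢
  linarith

noncomputable def Efun (d : ℕ) (ξ : Fin d → ℝ) (x : Fin d → ℤ) : ℂ :=
  Complex.exp (2 * (Real.pi : ℂ) * Complex.I * ∑ k, (x k : ℂ) * (ξ k : ℂ))

lemma abs_Efun (d : ℕ) (ξ : Fin d → ℝ) (x : Fin d → ℤ) : ‖Efun d ξ x‖ = 1 := by
  have hre : (∑ k, (x k : ℂ) * (ξ k : ℂ)) = (((∑ k, (x k : ℝ) * ξ k : ℝ)) : ℂ) := by
    push_cast
    rfl
  rw [Efun, hre,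
    show 2 * (Real.pi : ℂ) * Complex.I * (((∑ k, (x k : ℝ) * ξ k : ℝ)) : ℂ)
        = (((2 * Real.pi * (∑ k, (x k : ℝ) * ξ k) : ℝ)) : ℂ) * Complex.I by push_cast; ring,
    Complex.norm_exp_ofReal_mul_I]

lemma abs_sum_Efun {d : ℕ} (ξ : Fin d → ℝ) (F : Finset (Fin d → ℤ)) :
    ‖∑ x ∈ F, Efun d ξ x‖ ≤ F.card := by
  calc ‖∑ x ∈ F, Efun d ξ x‖ ≤ ∑ x ∈ F, ‖Efun d ξ x‖ :=
      norm_sum_le _ _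
    _ = F.card := by simp [abs_Efun]

lemma partA {d : ℕ} (ξ : Fin d → ℝ) (S B : Finset (Fin d → ℤ)) (hSB : S ⊆ B)
    (hS0 : 0 < S.card) :
    ‖(B.card : ℂ)⁻¹ * ∑ x ∈ B, Efun d ξ x
        - (S.card : ℂ)⁻¹ * ∑ x ∈ S, Efun d ξ x‖
      ≤ 2 * ((B.card : ℝ) - S.card) / B.card := by
  classical
  have hab : S.card ≤ B.card := Finset.card_le_card hSB
  have hB0 : 0 < B.card := lt_of_lt_of_le hS0 hab
  have haR : (0 : ℝ) < S.card := by exact_mod_cast hS0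
  have hbR : (0 : ℝ) < B.card := by exact_mod_cast hB0
  have hdecomp : (B.card : ℂ)⁻¹ * ∑ x ∈ B, Efun d ξ x - (S.card : ℂ)⁻¹ * ∑ x ∈ S, Efun d ξ x
      = (B.card : ℂ)⁻¹ * ∑ x ∈ B \ S, Efun d ξ x
        + ((B.card : ℂ)⁻¹ - (S.card : ℂ)⁻¹) * ∑ x ∈ S, Efun d ξ x := by
    rw [← Finset.sum_sdiff hSB]
    ring
  rw [hdecomp]
  have h1 : ‖(B.card : ℂ)⁻¹ * ∑ x ∈ B \ S, Efun d ξ x‖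
      ≤ ((B.card : ℝ))⁻¹ * ((B.card : ℝ) - S.card) := by
    rw [norm_mul, norm_inv, Complex.norm_natCast]
    have h2 := abs_sum_Efun ξ (B \ S)
    have h3 : ((B \ S).card : ℝ) = (B.card : ℝ) - S.card := by
      rw [Finset.card_sdiff_of_subset hSB, Nat.cast_sub hab]
    rw [h3] at h2
    exact mul_le_mul_of_nonneg_left h2 (by positivity)
  have h2 : ‖((B.card : ℂ)⁻¹ - (S.card : ℂ)⁻¹) * ∑ x ∈ S, Efun d ξ x‖
      ≤ (((S.card : ℝ))⁻¹ - ((B.card : ℝ))⁻¹) * S.card := by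
    rw [norm_mul]
    have h3 : ((B.card : ℂ)⁻¹ - (S.card : ℂ)⁻¹)
        = ((((B.card : ℝ))⁻¹ - ((S.card : ℝ))⁻¹ : ℝ) : ℂ) := by
      push_cast
      ring
    have h4 : ((B.card : ℝ))⁻¹ ≤ ((S.card : ℝ))⁻¹ :=
      inv_anti₀ haR (by exact_mod_cast hab)
    rw [h3, Complex.norm_real, Real.norm_eq_abs, abs_of_nonpos (by linarith), neg_sub]
    exact mul_le_mul_of_nonneg_left (abs_sum_Efun ξ S) (by linarith)
  calc ‖_‖ ≤ ‖(B.card : ℂ)⁻¹ * ∑ x ∈ B \ S, Efun d ξ x‖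
        + ‖((B.card : ℂ)⁻¹ - (S.card : ℂ)⁻¹) * ∑ x ∈ S, Efun d ξ x‖ :=
      norm_add_le _ _
    _ ≤ ((B.card : ℝ))⁻¹ * ((B.card : ℝ) - S.card)
        + (((S.card : ℝ))⁻¹ - ((B.card : ℝ))⁻¹) * S.card := add_le_add h1 h2
    _ = 2 * ((B.card : ℝ) - S.card) / B.card := by
      field_simp
      ring


end Cor25

/-- Corollary 2.5: for `d ≥ 4`, `1 ≤ t ≤ √d` and any `ξ ∈ 𝕋^d`,
`|m_t(ξ) - s_t(ξ)| ≤ 2e · t²/d`. -/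
theorem mMul_sub_sMul_bound (d t : ℕ) (hd : 4 ≤ d) (ht : 1 ≤ t)
    (htd : (t : ℝ) ≤ Real.sqrt d) (ξ : Fin d → ℝ) :
    ‖mMul d t ξ - sMul d t ξ‖ ≤ 2 * Real.exp 1 * (t : ℝ) ^ 2 / d := by
  classical
  have hd0 : (0 : ℝ) < d := by exact_mod_cast (by omega : 0 < d)
  have ht2 : t * t ≤ d := by
    have h1 : (t : ℝ) * t ≤ Real.sqrt d * Real.sqrt d :=
      mul_self_le_mul_self (by positivity) htd
    rw [Real.mul_self_sqrt (by positivity)] at h1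
    exact_mod_cast h1
  have htdn : t ≤ d := le_trans (Nat.le_mul_of_pos_left t ht) ht2
  have hSB : sphereS d t ⊆ latticeBall d t := by
    intro y hy
    obtain ⟨hy1, hy2⟩ := Finset.mem_filter.mp hy
    have habs : ∀ i, |y i| ≤ (t : ℤ) := by
      intro i
      calc |y i| ≤ ∑ i, |y i| :=
          Finset.single_le_sum (fun i _ => abs_nonneg (y i)) (Finset.mem_univ i)
        _ = t := hy2
    refine Finset.mem_filter.mpr ⟨Finset.mem_Icc.mpr ⟨?_, ?_⟩, le_of_eq hy2⟩
    · intro i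
      have h := (abs_le.mp (habs i)).1
      simpa using h
    · intro i
      have h := (abs_le.mp (habs i)).2
      simpa using h
  have hab : (sphereS d t).card ≤ (latticeBall d t).card := Finset.card_le_card hSB
  have hA0 : 2 ^ t * d.choose t ≤ (sphereS d t).card := Cor25.sphere_card_ge d t
  have ha0 : 0 < (sphereS d t).card :=
    lt_of_lt_of_le (Nat.mul_pos (pow_pos (by norm_num) t) (Nat.choose_pos htdn)) hA0
  have hb0 : 0 < (latticeBall d t).card := lt_of_lt_of_le ha0 hab
  have hbR : (0 : ℝ) < ((latticeBall d t).card : ℝ) := by exact_mod_cast hb0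
  have hD : d ≤ 2 * (d - t + 1) := by
    rcases Nat.lt_or_ge t 2 with h | h
    · omega
    · have h2 : 2 * t ≤ t * t := Nat.mul_le_mul_right t h
      have h3 : 2 * t ≤ d := le_trans h2 ht2
      omega
  set X : ℝ := (t : ℝ) ^ 2 / (2 * ((d - t + 1 : ℕ) : ℝ)) with hX_def
  have hDR : (0 : ℝ) < ((d - t + 1 : ℕ) : ℝ) := by
    have h : 0 < d - t + 1 := Nat.succ_pos _
    exact_mod_cast h
  have hX0 : 0 ≤ X := by rw [hX_def]; positivity
  have ht2R : (t : ℝ) ^ 2 ≤ d := by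
    have h : ((t * t : ℕ) : ℝ) ≤ (d : ℝ) := Nat.cast_le.mpr ht2
    push_cast at h
    nlinarith [h]
  have hXle : X ≤ (t : ℝ) ^ 2 / d := by
    rw [hX_def, div_le_div_iff₀ (by positivity) hd0]
    have h1 : (d : ℝ) ≤ 2 * ((d - t + 1 : ℕ) : ℝ) := by exact_mod_cast hD
    nlinarith [sq_nonneg (t : ℝ)]
  have hX1 : X ≤ 1 := hXle.trans (by rw [div_le_one hd0]; exact ht2R)
  have hexp : ∑ i ∈ range t, X ^ (i + 1) / ((i + 1).factorial : ℝ) ≤ X * Real.exp 1 := by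
    calc ∑ i ∈ range t, X ^ (i + 1) / ((i + 1).factorial : ℝ)
        ≤ ∑ i ∈ range t, X * (1 / ((i + 1).factorial : ℝ)) := by
          refine Finset.sum_le_sum fun i _ => ?_
          rw [mul_one_div]
          have hXp : X ^ (i + 1) ≤ X := by
            calc X ^ (i + 1) ≤ X ^ 1 := pow_le_pow_of_le_one hX0 hX1 (by omega)
              _ = X := pow_one X
          gcongr
      _ = X * ∑ i ∈ range t, (1 / ((i + 1).factorial : ℝ)) := by rw [Finset.mul_sum]
      _ ≤ X * Real.exp 1 := mul_le_mul_of_nonneg_left (Cor25.sum_inv_factorial_le t) hX0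
  have hterm : ∀ i ∈ range t,
      ((d.choose (t - (i + 1)) * (2 ^ (t - (i + 1)) * t.choose (t - (i + 1))) : ℕ) : ℝ)
        ≤ ((2 ^ t * d.choose t : ℕ) : ℝ) * (X ^ (i + 1) / ((i + 1).factorial : ℝ)) := by
    intro i hi
    have hi1 : i + 1 ≤ t := Finset.mem_range.mp hi
    have hnat := Cor25.term_le htdn hi1
    have hQ : (0 : ℝ) < (2 * ((d - t + 1 : ℕ) : ℝ)) ^ (i + 1) * ((i + 1).factorial : ℝ) := by
      positivity
    have hXpow : X ^ (i + 1) / ((i + 1).factorial : ℝ)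
        = ((t : ℝ) ^ 2) ^ (i + 1)
          / ((2 * ((d - t + 1 : ℕ) : ℝ)) ^ (i + 1) * ((i + 1).factorial : ℝ)) := by
      rw [hX_def, div_pow, div_div]
    rw [hXpow, ← mul_div_assoc, le_div_iff₀ hQ]
    have h2D : (2 : ℝ) * ((d - t + 1 : ℕ) : ℝ) = ((2 * (d - t + 1) : ℕ) : ℝ) := by
      push_cast; ring
    rw [h2D]
    exact_mod_cast hnat
  have h1 : (((latticeBall d t).card : ℕ) : ℝ)
      ≤ (∑ i ∈ range t,
          ((d.choose (t - (i + 1)) * (2 ^ (t - (i + 1)) * t.choose (t - (i + 1))) : ℕ) : ℝ))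
        + ((2 ^ t * d.choose t : ℕ) : ℝ) := by
    calc (((latticeBall d t).card : ℕ) : ℝ)
        ≤ ((∑ j ∈ range (d + 1), d.choose j * (2 ^ j * t.choose j) : ℕ) : ℝ) :=
          Nat.cast_le.mpr (Cor25.ball_card_le d t)
      _ = (((∑ i ∈ range t,
            d.choose (t - (i + 1)) * (2 ^ (t - (i + 1)) * t.choose (t - (i + 1))))
          + 2 ^ t * d.choose t : ℕ) : ℝ) := by rw [Cor25.sum_T d t htdn]
      _ = _ := by rw [Nat.cast_add, Nat.cast_sum]
  have hA0R : ((2 ^ t * d.choose t : ℕ) : ℝ) ≤ ((sphereS d t).card : ℝ) := Nat.cast_le.mpr hA0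
  have habR : ((sphereS d t).card : ℝ) ≤ ((latticeBall d t).card : ℝ) := Nat.cast_le.mpr hab
  have h3 : (∑ i ∈ range t,
        ((d.choose (t - (i + 1)) * (2 ^ (t - (i + 1)) * t.choose (t - (i + 1))) : ℕ) : ℝ))
      ≤ ((2 ^ t * d.choose t : ℕ) : ℝ) * (X * Real.exp 1) := by
    calc (∑ i ∈ range t,
          ((d.choose (t - (i + 1)) * (2 ^ (t - (i + 1)) * t.choose (t - (i + 1))) : ℕ) : ℝ))
        ≤ ∑ i ∈ range t,
            ((2 ^ t * d.choose t : ℕ) : ℝ) * (X ^ (i + 1) / ((i + 1).factorial : ℝ)) :=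
          Finset.sum_le_sum hterm
      _ = ((2 ^ t * d.choose t : ℕ) : ℝ)
            * ∑ i ∈ range t, X ^ (i + 1) / ((i + 1).factorial : ℝ) := by
          rw [Finset.mul_sum]
      _ ≤ ((2 ^ t * d.choose t : ℕ) : ℝ) * (X * Real.exp 1) :=
          mul_le_mul_of_nonneg_left hexp (by positivity)
  have h5 : ((2 ^ t * d.choose t : ℕ) : ℝ) * (X * Real.exp 1)
      ≤ ((latticeBall d t).card : ℝ) * ((t : ℝ) ^ 2 / d * Real.exp 1) := by
    apply mul_le_mul (le_trans hA0R habR)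
      (mul_le_mul_of_nonneg_right hXle (Real.exp_pos 1).le)
      (by positivity) (by positivity)
  have hkey : ((latticeBall d t).card : ℝ) - ((sphereS d t).card : ℝ)
      ≤ ((latticeBall d t).card : ℝ) * ((t : ℝ) ^ 2 / d * Real.exp 1) := by
    linarith [h1, hA0R, h3, h5]
  have hPA := Cor25.partA ξ (sphereS d t) (latticeBall d t) hSB ha0
  have heq : mMul d t ξ - sMul d t ξ
      = ((latticeBall d t).card : ℂ)⁻¹ * ∑ x ∈ latticeBall d t, Cor25.Efun d ξ x
        - ((sphereS d t).card : ℂ)⁻¹ * ∑ x ∈ sphereS d t, Cor25.Efun d ξ x := rfl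
  rw [heq]
  refine le_trans hPA ?_
  rw [div_le_div_iff₀ hbR hd0]
  have hmul := mul_le_mul_of_nonneg_right
    (mul_le_mul_of_nonneg_left hkey (by norm_num : (0:ℝ) ≤ 2)) hd0.le
  calc 2 * (((latticeBall d t).card : ℝ) - ((sphereS d t).card : ℝ)) * d
      ≤ 2 * (((latticeBall d t).card : ℝ) * ((t : ℝ) ^ 2 / d * Real.exp 1)) * d := hmul
    _ = 2 * Real.exp 1 * (t : ℝ) ^ 2 * ((latticeBall d t).card : ℝ) := by
        field_simp
end
end
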